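/- Let X₁, …, X_n be independent real-valued random variables with E X_i = 0, E X_i² ≤ b_i² and E|X_i|³ < ∞. Let S_n = X₁ + … + X_n and B_n² = ∑ b_i². Then E|S_n|³ ≤ ∑_{i=1}^n E|X_i|³ + 2·B_n³. -/

import Mathlib

open MeasureTheory ProbabilityTheory
open scoped ENNReal

private lemma abs_cube_add_le' (x y : ℝ) :
    |x + y| ^ 3 ≤ |x| ^ 3 + 3 * (x * |x|) * y + 3 * |x| * y ^ 2 + |y| ^ 3 := by
  rcases abs_cases (x + y) with ⟨h1, h1'⟩ | ⟨h1, h1'⟩ <;>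
  rcases abs_cases x with ⟨h2, h2'⟩ | ⟨h2, h2'⟩ <;>
  rcases abs_cases y with ⟨h3, h3'⟩ | ⟨h3, h3'⟩ <;>
  rw [h1, h2, h3] <;>
  nlinarith [sq_nonneg (x + y), sq_nonneg (x - y), sq_nonneg (2*x + 3*y),
    sq_nonneg (3*x + 2*y), sq_nonneg x, sq_nonneg y, sq_nonneg (x + 2*y), sq_nonneg (2*x + y)]

private lemma memℒp_three_of_int {Ω : Type*} [MeasurableSpace Ω] {μ : Measure Ω} {f : Ω → ℝ}
    (hm : Measurable f) (h : Integrable (fun ω => |f ω| ^ 3) μ) : MemLp f 3 μ := by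
  have h1 : MemLp (fun x => ‖f x‖ ^ ((3 : ℝ≥0∞)).toReal) ((3 : ℝ≥0∞) / 3) μ := by
    have h33 : (3 : ℝ≥0∞) / 3 = 1 := by
      rw [ENNReal.div_self] <;> norm_num
    rw [h33, memLp_one_iff_integrable]
    have : (fun x => ‖f x‖ ^ ((3 : ℝ≥0∞)).toReal) = fun ω => |f ω| ^ 3 := by
      funext x
      rw [Real.norm_eq_abs]
      rw [show ((3 : ℝ≥0∞)).toReal = ((3 : ℕ) : ℝ) by norm_num]
      rw [Real.rpow_natCast]
    rw [this]
    exact h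
  exact (memLp_norm_rpow_iff hm.aestronglyMeasurable (by norm_num) (by norm_num)).mp h1

private lemma int_abs_cube_of_memℒp {Ω : Type*} [MeasurableSpace Ω] {μ : Measure Ω} {f : Ω → ℝ}
    (h : MemLp f 3 μ) : Integrable (fun ω => |f ω| ^ 3) μ := by
  have := h.integrable_norm_rpow (by norm_num) (by norm_num)
  have he : (fun x => ‖f x‖ ^ ((3 : ℝ≥0∞)).toReal) = fun ω => |f ω| ^ 3 := by
    funext x
    rw [Real.norm_eq_abs]
    rw [show ((3 : ℝ≥0∞)).toReal = ((3 : ℕ) : ℝ) by norm_num]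
    rw [Real.rpow_natCast]
  rwa [he] at this

theorem rosenthal_third_moment {Ω : Type*} [MeasurableSpace Ω] (μ : Measure Ω)
    [IsProbabilityMeasure μ] (n : ℕ) (X : Fin n → Ω → ℝ) (b : Fin n → ℝ)
    (hmeas : ∀ i, Measurable (X i))
    (hindep : iIndepFun X μ)
    (hb : ∀ i, 0 < b i)
    (hmean : ∀ i, ∫ ω, X i ω ∂μ = 0)
    (hvar : ∀ i, ∫ ω, (X i ω) ^ 2 ∂μ ≤ (b i) ^ 2)
    (hint : ∀ i, Integrable (fun ω => |X i ω| ^ 3) μ) :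
    ∫ ω, |∑ i, X i ω| ^ 3 ∂μ ≤
      (∑ i, ∫ ω, |X i ω| ^ 3 ∂μ) + 2 * Real.sqrt (∑ i, (b i) ^ 2) ^ 3 := by
  classical
  -- basic MemLp facts
  have hX3 : ∀ i, MemLp (X i) 3 μ := fun i => memℒp_three_of_int (hmeas i) (hint i)
  have hS3 : ∀ s : Finset (Fin n), MemLp (∑ i ∈ s, X i) 3 μ := fun s =>
    memLp_finset_sum' s (fun i _ => hX3 i)
  -- integrability pack for MemLp 3 functions
  have pack : ∀ f : Ω → ℝ, MemLp f 3 μ → Integrable f μ ∧ Integrable (fun ω => (f ω) ^ 2) μ ∧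
      Integrable (fun ω => |f ω| ^ 3) μ ∧ Integrable (fun ω => f ω * |f ω|) μ ∧
      Integrable (fun ω => |f ω|) μ := by
    intro f hf
    have h2 : MemLp f 2 μ := hf.mono_exponent (by norm_num)
    have hsq : Integrable (fun ω => (f ω) ^ 2) μ := h2.integrable_sq
    have h1 : Integrable f μ := hf.integrable (by norm_num)
    refine ⟨h1, hsq, int_abs_cube_of_memℒp hf, ?_, h1.abs⟩
    refine hsq.mono' ?_ (Filter.Eventually.of_forall fun ω => ?_)
    · exact (hf.aestronglyMeasurable.mul hf.aestronglyMeasurable.norm).congr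
        (Filter.Eventually.of_forall fun ω => by simp [Real.norm_eq_abs])
    · rw [Real.norm_eq_abs, abs_mul, abs_abs, ← sq_abs]
      ring_nf
      exact le_refl _
  -- variance of partial sums
  have var_le : ∀ s : Finset (Fin n),
      ∫ ω, ((∑ i ∈ s, X i) ω) ^ 2 ∂μ ≤ ∑ i ∈ s, (b i) ^ 2 := by
    intro s
    induction s using Finset.induction_on with
    | empty => simp
    | @insert j s hj ih =>
      have hSY : IndepFun (∑ i ∈ s, X i) (X j) μ :=
        hindep.indepFun_finset_sum_of_notMem hmeas hj
      obtain ⟨hSint, hSsq, -, -, -⟩ := pack _ (hS3 s)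
      obtain ⟨hYint, hYsq, -, -, -⟩ := pack _ (hX3 j)
      have hmul : Integrable ((∑ i ∈ s, X i) * X j) μ := hSY.integrable_mul hSint hYint
      have hexp : ∀ ω, ((∑ i ∈ insert j s, X i) ω) ^ 2 =
          ((∑ i ∈ s, X i) ω) ^ 2 + 2 * (((∑ i ∈ s, X i) * X j) ω) + (X j ω) ^ 2 := by
        intro ω
        rw [Finset.sum_insert hj]
        simp [Pi.add_apply, Pi.mul_apply]
        ring
      calc ∫ ω, ((∑ i ∈ insert j s, X i) ω) ^ 2 ∂μ
          = ∫ ω, (((∑ i ∈ s, X i) ω) ^ 2 + 2 * (((∑ i ∈ s, X i) * X j) ω) + (X j ω) ^ 2) ∂μ := by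
            exact integral_congr_ae (Filter.Eventually.of_forall hexp)
        _ = (∫ ω, ((∑ i ∈ s, X i) ω) ^ 2 ∂μ) + 2 * (∫ ω, ((∑ i ∈ s, X i) * X j) ω ∂μ)
              + ∫ ω, (X j ω) ^ 2 ∂μ := by
            have i1 : Integrable (fun ω => 2 * ((∑ i ∈ s, X i) * X j) ω) μ := hmul.const_mul 2
            have i2 : Integrable
                (fun ω => ((∑ i ∈ s, X i) ω) ^ 2 + 2 * ((∑ i ∈ s, X i) * X j) ω) μ := hSsq.add i1
            rw [integral_add i2 hYsq, integral_add hSsq i1, integral_const_mul]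
        _ = (∫ ω, ((∑ i ∈ s, X i) ω) ^ 2 ∂μ) + 2 * ((∫ ω, (∑ i ∈ s, X i) ω ∂μ) * ∫ ω, X j ω ∂μ)
              + ∫ ω, (X j ω) ^ 2 ∂μ := by
            rw [hSY.integral_mul_eq_mul_integral hSint.1 hYint.1]
        _ ≤ ∑ i ∈ s, (b i) ^ 2 + 2 * 0 + (b j) ^ 2 := by
            rw [hmean j, mul_zero, mul_zero]
            exact add_le_add (add_le_add ih le_rfl) (hvar j)
        _ = ∑ i ∈ insert j s, (b i) ^ 2 := by rw [Finset.sum_insert hj]; ring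
  -- E|S| ≤ sqrt(V)
  have absmean_le : ∀ s : Finset (Fin n),
      ∫ ω, |(∑ i ∈ s, X i) ω| ∂μ ≤ Real.sqrt (∑ i ∈ s, (b i) ^ 2) := by
    intro s
    rcases s.eq_empty_or_nonempty with rfl | hne
    · simp
    · set V : ℝ := ∑ i ∈ s, (b i) ^ 2 with hV
      have hVpos : 0 < V := by
        apply Finset.sum_pos (fun i _ => pow_pos (hb i) 2) hne
      set t : ℝ := Real.sqrt V with ht
      have htpos : 0 < t := Real.sqrt_pos.mpr hVpos
      have ht2 : t ^ 2 = V := Real.sq_sqrt hVpos.le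
      obtain ⟨hSint, hSsq, -, -, hSabs⟩ := pack _ (hS3 s)
      have hpt : ∀ ω, |(∑ i ∈ s, X i) ω| ≤ ((∑ i ∈ s, X i) ω) ^ 2 * (1 / (2 * t)) + t / 2 := by
        intro ω
        have hkey : 2 * t * |(∑ i ∈ s, X i) ω| ≤ ((∑ i ∈ s, X i) ω) ^ 2 + t ^ 2 := by
          nlinarith [sq_nonneg (|(∑ i ∈ s, X i) ω| - t), sq_abs ((∑ i ∈ s, X i) ω)]
        have h2t : (0:ℝ) < 2 * t := by positivity
        calc |(∑ i ∈ s, X i) ω| = (2 * t * |(∑ i ∈ s, X i) ω|) / (2 * t) := by field_simp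
          _ ≤ (((∑ i ∈ s, X i) ω) ^ 2 + t ^ 2) / (2 * t) := by gcongr
          _ = ((∑ i ∈ s, X i) ω) ^ 2 * (1 / (2 * t)) + t / 2 := by field_simp
      calc ∫ ω, |(∑ i ∈ s, X i) ω| ∂μ
          ≤ ∫ ω, (((∑ i ∈ s, X i) ω) ^ 2 * (1 / (2 * t)) + t / 2) ∂μ := by
            exact integral_mono hSabs ((hSsq.mul_const _).add (integrable_const _))
              (fun ω => hpt ω)
        _ = (∫ ω, ((∑ i ∈ s, X i) ω) ^ 2 ∂μ) * (1 / (2 * t)) + t / 2 := by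
            rw [integral_add (hSsq.mul_const _) (integrable_const _), integral_mul_const,
              integral_const]
            simp
        _ ≤ V * (1 / (2 * t)) + t / 2 := by
            have h2t : (0:ℝ) ≤ 1 / (2 * t) := by positivity
            linarith [mul_le_mul_of_nonneg_right (var_le s) h2t]
        _ = t := by
            rw [← ht2]
            field_simp
            ring
  -- main induction
  have key : ∀ s : Finset (Fin n),
      ∫ ω, |(∑ i ∈ s, X i) ω| ^ 3 ∂μ ≤
        (∑ i ∈ s, ∫ ω, |X i ω| ^ 3 ∂μ) + 2 * Real.sqrt (∑ i ∈ s, (b i) ^ 2) ^ 3 := by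
    intro s
    induction s using Finset.induction_on with
    | empty => simp
    | @insert j s hj ih =>
      set S : Ω → ℝ := ∑ i ∈ s, X i with hS
      set Y : Ω → ℝ := X j with hYdef
      have hSY : IndepFun S Y μ := hindep.indepFun_finset_sum_of_notMem hmeas hj
      obtain ⟨hSint, hSsq, hSc, hSsa, hSabs⟩ := pack _ (hS3 s)
      obtain ⟨hYint, hYsq, hYc, -, -⟩ := pack _ (hX3 j)
      -- independence of composed functions
      have hm1 : Measurable (fun x : ℝ => x * |x|) := measurable_id.mul measurable_abs
      have hm2 : Measurable (fun x : ℝ => |x|) := measurable_abs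
      have hm3 : Measurable (fun x : ℝ => x ^ 2) := measurable_id.pow_const 2
      have hI1 : IndepFun (fun ω => S ω * |S ω|) Y μ := hSY.comp hm1 measurable_id
      have hI2 : IndepFun (fun ω => |S ω|) (fun ω => (Y ω) ^ 2) μ := hSY.comp hm2 hm3
      have hmulint1 : Integrable (fun ω => (S ω * |S ω|) * Y ω) μ :=
        hI1.integrable_mul hSsa hYint
      have hmulint2 : Integrable (fun ω => |S ω| * (Y ω) ^ 2) μ :=
        hI2.integrable_mul hSabs hYsq
      have hmean1 : ∫ ω, (S ω * |S ω|) * Y ω ∂μ = 0 := by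
        have h : ∫ ω, (S ω * |S ω|) * Y ω ∂μ
            = (∫ ω, S ω * |S ω| ∂μ) * ∫ ω, Y ω ∂μ :=
          hI1.integral_fun_mul_eq_mul_integral hSsa.1 hYint.1
        rw [h, hmean j, mul_zero]
      have hmean2 : ∫ ω, |S ω| * (Y ω) ^ 2 ∂μ ≤ Real.sqrt (∑ i ∈ s, (b i) ^ 2) * (b j) ^ 2 := by
        have h : ∫ ω, |S ω| * (Y ω) ^ 2 ∂μ
            = (∫ ω, |S ω| ∂μ) * ∫ ω, (Y ω) ^ 2 ∂μ :=
          hI2.integral_fun_mul_eq_mul_integral hSabs.1 hYsq.1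
        rw [h]
        have h1 : 0 ≤ ∫ ω, |S ω| ∂μ := integral_nonneg (fun ω => abs_nonneg _)
        have h2 : 0 ≤ ∫ ω, (Y ω) ^ 2 ∂μ := integral_nonneg (fun ω => sq_nonneg _)
        exact mul_le_mul (absmean_le s) (hvar j) h2 (Real.sqrt_nonneg _)
      have hptw : ∀ ω, |(∑ i ∈ insert j s, X i) ω| ^ 3 ≤
          |S ω| ^ 3 + 3 * ((S ω * |S ω|) * Y ω) + 3 * (|S ω| * (Y ω) ^ 2) + |Y ω| ^ 3 := by
        intro ω
        have h := abs_cube_add_le' (S ω) (Y ω)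
        have he : (∑ i ∈ insert j s, X i) ω = S ω + Y ω := by
          rw [Finset.sum_insert hj]
          simp [hS, hYdef, add_comm]
        rw [he]
        nlinarith [h]
      have hintins : Integrable (fun ω => |(∑ i ∈ insert j s, X i) ω| ^ 3) μ :=
        int_abs_cube_of_memℒp (hS3 _)
      have i3 : Integrable (fun ω => 3 * ((S ω * |S ω|) * Y ω)) μ := hmulint1.const_mul 3
      have i4 : Integrable (fun ω => 3 * (|S ω| * (Y ω) ^ 2)) μ := hmulint2.const_mul 3
      have i5 : Integrable (fun ω => |S ω| ^ 3 + 3 * ((S ω * |S ω|) * Y ω)) μ := hSc.add i3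
      have i6 : Integrable (fun ω => |S ω| ^ 3 + 3 * ((S ω * |S ω|) * Y ω)
          + 3 * (|S ω| * (Y ω) ^ 2)) μ := i5.add i4
      have hintrhs : Integrable (fun ω => |S ω| ^ 3 + 3 * ((S ω * |S ω|) * Y ω)
          + 3 * (|S ω| * (Y ω) ^ 2) + |Y ω| ^ 3) μ := i6.add hYc
      calc ∫ ω, |(∑ i ∈ insert j s, X i) ω| ^ 3 ∂μ
          ≤ ∫ ω, (|S ω| ^ 3 + 3 * ((S ω * |S ω|) * Y ω)
              + 3 * (|S ω| * (Y ω) ^ 2) + |Y ω| ^ 3) ∂μ :=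
            integral_mono hintins hintrhs hptw
        _ = (∫ ω, |S ω| ^ 3 ∂μ) + 3 * (∫ ω, (S ω * |S ω|) * Y ω ∂μ)
              + 3 * (∫ ω, |S ω| * (Y ω) ^ 2 ∂μ) + ∫ ω, |Y ω| ^ 3 ∂μ := by
            rw [integral_add i6 hYc, integral_add i5 i4, integral_add hSc i3,
              integral_const_mul, integral_const_mul]
        _ ≤ ((∑ i ∈ s, ∫ ω, |X i ω| ^ 3 ∂μ) + 2 * Real.sqrt (∑ i ∈ s, (b i) ^ 2) ^ 3)
              + 3 * 0 + 3 * (Real.sqrt (∑ i ∈ s, (b i) ^ 2) * (b j) ^ 2)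
              + ∫ ω, |Y ω| ^ 3 ∂μ := by
            rw [hmean1]
            gcongr
        _ ≤ (∑ i ∈ insert j s, ∫ ω, |X i ω| ^ 3 ∂μ)
              + 2 * Real.sqrt (∑ i ∈ insert j s, (b i) ^ 2) ^ 3 := by
            rw [Finset.sum_insert hj, Finset.sum_insert hj]
            set a := Real.sqrt (∑ i ∈ s, (b i) ^ 2) with ha
            set c := Real.sqrt ((b j) ^ 2 + ∑ i ∈ s, (b i) ^ 2) with hc
            have hVnn : 0 ≤ ∑ i ∈ s, (b i) ^ 2 :=
              Finset.sum_nonneg (fun i _ => sq_nonneg _)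
            have ha2 : a ^ 2 = ∑ i ∈ s, (b i) ^ 2 := Real.sq_sqrt hVnn
            have hc2 : c ^ 2 = (b j) ^ 2 + ∑ i ∈ s, (b i) ^ 2 :=
              Real.sq_sqrt (by positivity)
            have hac : a ≤ c := Real.sqrt_le_sqrt (by linarith [sq_nonneg (b j)])
            have hann : 0 ≤ a := Real.sqrt_nonneg _
            have hcnn : 0 ≤ c := Real.sqrt_nonneg _
            have harith : 2 * a ^ 3 + 3 * (a * (b j) ^ 2) ≤ 2 * c ^ 3 := by
              nlinarith [sq_nonneg (c - a), mul_nonneg (mul_nonneg (sub_nonneg.mpr hac) (sub_nonneg.mpr hac)) hcnn, mul_nonneg (mul_nonneg (sub_nonneg.mpr hac) (sub_nonneg.mpr hac)) hann]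
            linarith
  -- conclude
  have :=
    key Finset.univ
  simpa [Finset.sum_apply] using this
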